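/- For every subset I = {i_1<⋯<i_r} ⊆ {0,…,n−1}: y_{i_1} y_{i_2} ⋯ y_{i_r} · y_∅ = (−1)^{i_1+i_2+⋯+i_r} · y_I in Cl(V,Q), where y_∅ = y_{\bar{0}} y_{\bar{1}} ⋯ y_{\overline{n−1}} · y. -/

import Mathlib

set_option linter.unusedSectionVars false


open scoped BigOperators

noncomputable section

variable (F : Type*) [Field F] [CharZero F]

/-- The bilinear form on `V = F^{2n}` (with coordinates indexed by `Fin n ⊕ Fin n`,
where `Sum.inl i` is the "barred" index `ī` and `Sum.inr i` is the index `i`) given by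
`B(u,v) = ∑_i u_ī v_i`. -/
noncomputable def Bform (n : ℕ) :
    LinearMap.BilinMap F ((Fin n ⊕ Fin n) → F) F :=
  LinearMap.mk₂ F (fun u v => ∑ i : Fin n, u (Sum.inl i) * v (Sum.inr i))
    (fun u u' v => by simp [add_mul, Finset.sum_add_distrib])
    (fun c u v => by simp [Finset.mul_sum, mul_assoc])
    (fun u v v' => by simp [mul_add, Finset.sum_add_distrib])
    (fun c u v => by simp [Finset.mul_sum]; ring_nf; simp [mul_assoc, mul_comm, mul_left_comm])

/-- The quadratic form `Q(v) = ∑_{i=0}^{n−1} v_ī v_i` on `V = F^{2n}`.  The associated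
Clifford algebra satisfies `y_ī y_i + y_i y_ī = 1`, `y_i y_j = −y_j y_i` for `j ≠ ī`,
and `y_i² = y_ī² = 0`. -/
noncomputable def Qform (n : ℕ) : QuadraticForm F ((Fin n ⊕ Fin n) → F) :=
  (Bform F n).toQuadraticMap

/-- `y_ī`, the image in the Clifford algebra of the barred basis vector. -/
noncomputable def yb {n : ℕ} (i : Fin n) : CliffordAlgebra (Qform F n) :=
  CliffordAlgebra.ι (Qform F n) (Pi.single (Sum.inl i) 1)

/-- `y_i`, the image in the Clifford algebra of the unbarred basis vector. -/
noncomputable def yp {n : ℕ} (i : Fin n) : CliffordAlgebra (Qform F n) :=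
  CliffordAlgebra.ι (Qform F n) (Pi.single (Sum.inr i) 1)

/-- `y = y_0 y_1 ⋯ y_{n−1}`. -/
noncomputable def yE (n : ℕ) : CliffordAlgebra (Qform F n) :=
  (List.ofFn fun i : Fin n => yp F i).prod

/-- The standard spinor `y_I = y_{ī'_1} ⋯ y_{ī'_{n−r}} · y`, where
`I' = {i'_1 < ⋯ < i'_{n−r}}` is the complement of `I` in `{0,…,n−1}`. -/
noncomputable def spinor {n : ℕ} (I : Finset (Fin n)) : CliffordAlgebra (Qform F n) :=
  ((Iᶜ.sort (· ≤ ·)).map fun i => yb F i).prod * yE F n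
variable {n : ℕ}

lemma Bform_apply (u v : (Fin n ⊕ Fin n) → F) :
    Bform F n u v = ∑ i : Fin n, u (Sum.inl i) * v (Sum.inr i) := rfl

lemma Q_single_inl (i : Fin n) : Qform F n (Pi.single (Sum.inl i) 1) = 0 := by
  simp [Qform, LinearMap.BilinMap.toQuadraticMap_apply, Bform_apply, Pi.single_apply]

lemma Q_single_inr (i : Fin n) : Qform F n (Pi.single (Sum.inr i) 1) = 0 := by
  simp [Qform, LinearMap.BilinMap.toQuadraticMap_apply, Bform_apply, Pi.single_apply]

lemma polar_Q (u v : (Fin n ⊕ Fin n) → F) :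
    QuadraticMap.polar (⇑(Qform F n)) u v = Bform F n u v + Bform F n v u :=
  LinearMap.BilinMap.polar_toQuadraticMap _ _

lemma yp_sq (i : Fin n) : yp F i * yp F i = 0 := by
  rw [yp, CliffordAlgebra.ι_sq_scalar, Q_single_inr, map_zero]

lemma yb_sq (i : Fin n) : yb F i * yb F i = 0 := by
  rw [yb, CliffordAlgebra.ι_sq_scalar, Q_single_inl, map_zero]

lemma yp_yb_same (i : Fin n) : yp F i * yb F i = 1 - yb F i * yp F i := by
  have h := CliffordAlgebra.ι_mul_ι_add_swap (Q := Qform F n)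
    (Pi.single (Sum.inr i) 1) (Pi.single (Sum.inl i) 1)
  rw [polar_Q] at h
  simp only [Bform_apply, Pi.single_apply] at h
  simp at h
  simp only [yp, yb]
  linear_combination (norm := noncomm_ring) h

lemma yp_yb_ne {i j : Fin n} (h : i ≠ j) : yp F i * yb F j = - (yb F j * yp F i) := by
  have h2 := CliffordAlgebra.ι_mul_ι_add_swap (Q := Qform F n)
    (Pi.single (Sum.inr i) 1) (Pi.single (Sum.inl j) 1)
  rw [polar_Q] at h2
  simp only [Bform_apply, Pi.single_apply] at h2
  simp [Ne.symm h, h] at h2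
  simp only [yp, yb]
  linear_combination (norm := noncomm_ring) h2

lemma yp_yp (i j : Fin n) : yp F i * yp F j = - (yp F j * yp F i) := by
  have h2 := CliffordAlgebra.ι_mul_ι_add_swap (Q := Qform F n)
    (Pi.single (Sum.inr i) 1) (Pi.single (Sum.inr j) 1)
  rw [polar_Q] at h2
  simp only [Bform_apply, Pi.single_apply] at h2
  simp at h2
  simp only [yp]
  linear_combination (norm := noncomm_ring) h2

lemma yb_yb (i j : Fin n) : yb F i * yb F j = - (yb F j * yb F i) := by
  have h2 := CliffordAlgebra.ι_mul_ι_add_swap (Q := Qform F n)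
    (Pi.single (Sum.inl i) 1) (Pi.single (Sum.inl j) 1)
  rw [polar_Q] at h2
  simp only [Bform_apply, Pi.single_apply] at h2
  simp at h2
  simp only [yb]
  linear_combination (norm := noncomm_ring) h2

lemma yp_mul_prod_yp_mem (l : List (Fin n)) (i : Fin n) (h : i ∈ l) :
    yp F i * (l.map (yp F)).prod = 0 := by
  induction l with
  | nil => simp at h
  | cons a t ih =>
    rcases List.mem_cons.1 h with rfl | h
    · by_cases ht : i ∈ t
      · rw [List.map_cons, List.prod_cons, ← mul_assoc, yp_yp, neg_mul,
          mul_assoc, ih ht, mul_zero, neg_zero]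
      · rw [List.map_cons, List.prod_cons, ← mul_assoc, yp_sq, zero_mul]
    · rw [List.map_cons, List.prod_cons, ← mul_assoc, yp_yp, neg_mul,
        mul_assoc, ih h, mul_zero, neg_zero]

lemma yp_mul_yE (i : Fin n) : yp F i * yE F n = 0 := by
  rw [yE, show (List.ofFn fun i : Fin n => yp F i) = (List.finRange n).map (yp F) from
    List.ofFn_eq_map]
  exact yp_mul_prod_yp_mem F _ i (List.mem_finRange i)

lemma yp_mul_prod_yb (l : List (Fin n)) (i : Fin n) (h : i ∉ l) :
    yp F i * (l.map (yb F)).prod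
      = ((-1 : F) ^ l.length) • ((l.map (yb F)).prod * yp F i) := by
  induction l with
  | nil => simp
  | cons a t ih =>
    have hia : i ≠ a := fun hh => h (hh ▸ List.mem_cons_self)
    have hit : i ∉ t := fun hh => h (List.mem_cons_of_mem a hh)
    rw [List.map_cons, List.prod_cons, ← mul_assoc, yp_yb_ne F hia, neg_mul,
      mul_assoc, ih hit, List.length_cons, pow_succ]
    rw [mul_smul_comm]
    rw [← mul_assoc]
    rw [mul_neg_one, neg_smul]

lemma val_split_mem (S : Finset (Fin n)) (i : Fin n) (h : i ∈ S) :
    S.1 = (S.filter (· < i)).1 + (i ::ₘ (S.filter (i < ·)).1) := by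
  have h1 : S.filter (i ≤ ·) = insert i (S.filter (i < ·)) := by
    ext j
    simp only [Finset.mem_filter, Finset.mem_insert]
    constructor
    · rintro ⟨hj, hij⟩
      rcases eq_or_lt_of_le hij with rfl | hlt
      · exact Or.inl rfl
      · exact Or.inr ⟨hj, hlt⟩
    · rintro (rfl | ⟨hj, hlt⟩)
      · exact ⟨h, le_refl _⟩
      · exact ⟨hj, le_of_lt hlt⟩
  have h2 : i ∉ S.filter (i < ·) := by simp
  have h3 : (S.filter (i ≤ ·)).1 = i ::ₘ (S.filter (i < ·)).1 := by
    rw [h1, Finset.insert_val_of_notMem h2]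
  have h4 : S.filter (· < i) = S.filter (fun j => ¬ i ≤ j) := by
    apply Finset.filter_congr; intro j _; simp [not_le]
  rw [← h3, h4, Finset.filter_val, Finset.filter_val, add_comm]
  exact (Multiset.filter_add_not (fun j => i ≤ j) S.1).symm

lemma val_split_not_mem (S : Finset (Fin n)) (i : Fin n) (h : i ∉ S) :
    S.1 = (S.filter (· < i)).1 + (S.filter (i < ·)).1 := by
  have h1 : S.filter (i ≤ ·) = S.filter (i < ·) := by
    apply Finset.filter_congr; intro j hj
    constructor
    · intro hij; exact lt_of_le_of_ne hij (fun hh => h (hh ▸ hj))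
    · exact le_of_lt
  have h4 : S.filter (· < i) = S.filter (fun j => ¬ i ≤ j) := by
    apply Finset.filter_congr; intro j _; simp [not_le]
  rw [← h1, h4, Finset.filter_val, Finset.filter_val, add_comm]
  exact (Multiset.filter_add_not (fun j => i ≤ j) S.1).symm

lemma sort_split_mem (S : Finset (Fin n)) (i : Fin n) (h : i ∈ S) :
    S.sort (· ≤ ·) = ((S.filter (· < i)).sort (· ≤ ·))
      ++ i :: ((S.filter (i < ·)).sort (· ≤ ·)) := by
  refine (fun hp h1 h2 => List.Perm.eq_of_pairwise' (r := (· ≤ ·)) h1 h2 hp) ?_ ?_ ?_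
  · rw [← Multiset.coe_eq_coe, ← Multiset.coe_add, ← Multiset.cons_coe,
      Finset.sort_eq, Finset.sort_eq, Finset.sort_eq]
    exact val_split_mem S i h
  · exact Finset.pairwise_sort _ _
  · rw [List.pairwise_append]
    refine ⟨Finset.pairwise_sort _ _, ?_, ?_⟩
    · rw [List.pairwise_cons]
      refine ⟨fun b hb => ?_, Finset.pairwise_sort _ _⟩
      exact le_of_lt (Finset.mem_filter.1 ((Finset.mem_sort _).1 hb)).2
    · intro a ha b hb
      have ha' := (Finset.mem_filter.1 ((Finset.mem_sort _).1 ha)).2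
      rcases List.mem_cons.1 hb with rfl | hb
      · exact le_of_lt ha'
      · exact le_of_lt (lt_trans ha' (Finset.mem_filter.1 ((Finset.mem_sort _).1 hb)).2)

lemma sort_split_not_mem (S : Finset (Fin n)) (i : Fin n) (h : i ∉ S) :
    S.sort (· ≤ ·) = ((S.filter (· < i)).sort (· ≤ ·))
      ++ ((S.filter (i < ·)).sort (· ≤ ·)) := by
  refine (fun hp h1 h2 => List.Perm.eq_of_pairwise' (r := (· ≤ ·)) h1 h2 hp) ?_ ?_ ?_
  · rw [← Multiset.coe_eq_coe, ← Multiset.coe_add,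
      Finset.sort_eq, Finset.sort_eq, Finset.sort_eq]
    exact val_split_not_mem S i h
  · exact Finset.pairwise_sort _ _
  · rw [List.pairwise_append]
    refine ⟨Finset.pairwise_sort _ _, Finset.pairwise_sort _ _, ?_⟩
    intro a ha b hb
    have ha' := (Finset.mem_filter.1 ((Finset.mem_sort _).1 ha)).2
    have hb' := (Finset.mem_filter.1 ((Finset.mem_sort _).1 hb)).2
    exact le_of_lt (lt_trans ha' hb')

lemma card_filter_lt (J : Finset (Fin n)) (i : Fin n) (hmin : ∀ j ∈ J, i < j) :
    (Jᶜ.filter (· < i)).card = (i : ℕ) := by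
  have : Jᶜ.filter (· < i) = Finset.Iio i := by
    ext j
    simp only [Finset.mem_filter, Finset.mem_compl, Finset.mem_Iio]
    constructor
    · exact fun hh => hh.2
    · intro hj
      refine ⟨fun hjJ => ?_, hj⟩
      exact absurd (hmin j hjJ) (not_lt_of_gt hj)
  rw [this, Fin.card_Iio]

lemma not_mem_sort_filter_lt (S : Finset (Fin n)) (i : Fin n) :
    i ∉ (S.filter (· < i)).sort (· ≤ ·) := by
  intro hh
  exact absurd (Finset.mem_filter.1 ((Finset.mem_sort _).1 hh)).2 (lt_irrefl i)

lemma not_mem_sort_filter_gt (S : Finset (Fin n)) (i : Fin n) :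
    i ∉ (S.filter (i < ·)).sort (· ≤ ·) := by
  intro hh
  exact absurd (Finset.mem_filter.1 ((Finset.mem_sort _).1 hh)).2 (lt_irrefl i)

lemma yp_mul_spinor_min (J : Finset (Fin n)) (i : Fin n) (hiJ : i ∉ J)
    (hmin : ∀ j ∈ J, i < j) :
    yp F i * spinor F J = ((-1 : F) ^ (i : ℕ)) • spinor F (insert i J) := by
  have hiJc : i ∈ Jᶜ := Finset.mem_compl.2 hiJ
  set A := Jᶜ.filter (· < i) with hA
  set B := Jᶜ.filter (i < ·) with hB
  have hsort : Jᶜ.sort (· ≤ ·) = A.sort (· ≤ ·) ++ i :: B.sort (· ≤ ·) :=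
    sort_split_mem Jᶜ i hiJc
  have hcomp : (insert i J)ᶜ = Jᶜ.erase i := by
    rw [Finset.compl_insert]
  have hAe : (Jᶜ.erase i).filter (· < i) = A := by
    rw [hA]
    ext j
    simp only [Finset.mem_filter, Finset.mem_erase]
    constructor
    · rintro ⟨⟨_, hj⟩, hlt⟩; exact ⟨hj, hlt⟩
    · rintro ⟨hj, hlt⟩; exact ⟨⟨ne_of_lt hlt, hj⟩, hlt⟩
  have hBe : (Jᶜ.erase i).filter (i < ·) = B := by
    rw [hB]
    ext j
    simp only [Finset.mem_filter, Finset.mem_erase]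
    constructor
    · rintro ⟨⟨_, hj⟩, hlt⟩; exact ⟨hj, hlt⟩
    · rintro ⟨hj, hlt⟩; exact ⟨⟨(ne_of_lt hlt).symm, hj⟩, hlt⟩
  have hsort2 : (insert i J)ᶜ.sort (· ≤ ·) = A.sort (· ≤ ·) ++ B.sort (· ≤ ·) := by
    rw [hcomp, ← hAe, ← hBe]
    exact sort_split_not_mem _ i (fun hh => (Finset.mem_erase.1 hh).1 rfl)
  set A' := ((A.sort (· ≤ ·)).map (yb F)).prod with hA'
  set B' := ((B.sort (· ≤ ·)).map (yb F)).prod with hB'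
  have hlenA : (A.sort (· ≤ ·)).length = (i : ℕ) := by
    rw [Finset.length_sort]
    exact card_filter_lt J i hmin
  have key1 : yp F i * A' = ((-1 : F) ^ (i : ℕ)) • (A' * yp F i) := by
    rw [hA', ← hlenA]
    exact yp_mul_prod_yb F _ i (not_mem_sort_filter_lt Jᶜ i)
  have key2 : yp F i * (B' * yE F n) = 0 := by
    rw [hB', ← mul_assoc, yp_mul_prod_yb F _ i (not_mem_sort_filter_gt Jᶜ i),
      smul_mul_assoc, mul_assoc, yp_mul_yE, mul_zero, smul_zero]
  rw [spinor, hsort, List.map_append, List.prod_append, List.map_cons, List.prod_cons]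
  rw [spinor, hsort2, List.map_append, List.prod_append]
  rw [← hA', ← hB']
  calc yp F i * (A' * (yb F i * B') * yE F n)
      = (yp F i * A') * (yb F i * (B' * yE F n)) := by noncomm_ring
    _ = ((-1 : F) ^ (i : ℕ)) • (A' * (yp F i * (yb F i * (B' * yE F n)))) := by
        rw [key1]; rw [smul_mul_assoc, mul_assoc]
    _ = ((-1 : F) ^ (i : ℕ)) • (A' * ((1 - yb F i * yp F i) * (B' * yE F n))) := by
        rw [← mul_assoc (yp F i), yp_yb_same]
    _ = ((-1 : F) ^ (i : ℕ)) • (A' * (B' * yE F n))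
          - ((-1 : F) ^ (i : ℕ)) • (A' * (yb F i * (yp F i * (B' * yE F n)))) := by
        rw [sub_mul, one_mul, mul_sub, smul_sub, mul_assoc (yb F i)]
    _ = ((-1 : F) ^ (i : ℕ)) • (A' * B' * yE F n) := by
        rw [key2, mul_zero, mul_zero, smul_zero, sub_zero, mul_assoc]

/-- For every subset `I = {i_1<⋯<i_r} ⊆ {0,…,n−1}`:
`y_{i_1} y_{i_2} ⋯ y_{i_r} · y_∅ = (−1)^{i_1+⋯+i_r} · y_I` in `Cl(V,Q)`, where
`y_∅ = y_{0̄} y_{1̄} ⋯ y_{\overline{n−1}} · y`. -/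
theorem spinor_alt_basis (n : ℕ) (I : Finset (Fin n)) :
    ((I.sort (· ≤ ·)).map fun i => yp F i).prod * spinor F (∅ : Finset (Fin n)) =
      ((-1 : F) ^ (∑ i ∈ I, (i : ℕ))) • spinor F I := by
  induction I using Finset.strongInduction with
  | _ I ih =>
    rcases I.eq_empty_or_nonempty with rfl | hne
    · simp
    · set i := I.min' hne with hi
      have hiI : i ∈ I := I.min'_mem hne
      have hfl : I.filter (· < i) = ∅ := by
        apply Finset.filter_false_of_mem
        intro j hj
        exact not_lt_of_ge (I.min'_le j hj)
      have hfg : I.filter (i < ·) = I.erase i := by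
        ext j
        simp only [Finset.mem_filter, Finset.mem_erase]
        constructor
        · rintro ⟨hj, hlt⟩; exact ⟨(ne_of_lt hlt).symm, hj⟩
        · rintro ⟨hne', hj⟩; exact ⟨hj, lt_of_le_of_ne (I.min'_le j hj) (Ne.symm hne')⟩
      have hsort : I.sort (· ≤ ·) = i :: (I.erase i).sort (· ≤ ·) := by
        rw [sort_split_mem I i hiI, hfl, hfg, Finset.sort_empty, List.nil_append]
      have hmin : ∀ j ∈ I.erase i, i < j := by
        intro j hj
        rcases Finset.mem_erase.1 hj with ⟨hne', hj'⟩
        exact lt_of_le_of_ne (I.min'_le j hj') (Ne.symm hne')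
      have hiE : i ∉ I.erase i := Finset.notMem_erase i I
      rw [hsort, List.map_cons, List.prod_cons, mul_assoc,
        ih (I.erase i) (Finset.erase_ssubset hiI), mul_smul_comm,
        yp_mul_spinor_min F (I.erase i) i hiE hmin, Finset.insert_erase hiI,
        smul_smul, ← pow_add]
      congr 2
      exact Finset.sum_erase_add I (fun j => (j : ℕ)) hiI

end
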